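/- arXiv:2211.11091 — 2 statements merged into one kernel-verified Lean document; each statement's English description precedes it below -/
import Mathlib

section
/- Assume char(k) = 0. Let M and M' be monomials in k[x_1,…,x_n] with M' < M in the lexicographic order with x_1 > x_2 > … > x_n. Then for every m-tuple k = (k_1,…,k_m) ∈ ℕ^m for which Pol_k(M) and Pol_k(M') are nonzero, the leading monomial of Pol_k(M') is strictly smaller than the leading monomial of Pol_k(M) with respect to the lexicographic order on k[x_i^{(j)}] given by the variable ordering x_1^{(1)} > x_2^{(1)} > … > x_n^{(1)} > x_1^{(2)} > x_2^{(2)} > … > x_n^{(2)} > … > x_n^{(m)}. -/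
open MvPolynomial

/-- The polarization `Pol_κ(f)`: the coefficient of `t₁^{κ₁} ⋯ t_m^{κ_m}` in `Φ(f)` where
`Φ : k[x₁,…,xₙ] → k[x_i^{(j)}][t₁,…,t_m]` is the algebra map sending `x_i ↦ Σ_j x_i^{(j)} t_j`.
The variables `x_i^{(j)}` are indexed by `emb i j : σ`. -/
noncomputable def Pol {k : Type*} [CommSemiring k] {n m : ℕ} {σ : Type*}
    (emb : Fin n → Fin m → σ) (f : MvPolynomial (Fin n) k) (κ : Fin m → ℕ) :
    MvPolynomial σ k :=
  MvPolynomial.coeff (Finsupp.equivFunOnFinite.symm κ)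
    (MvPolynomial.aeval
      (fun i => ∑ j : Fin m, (MvPolynomial.C (MvPolynomial.X (emb i j)) * MvPolynomial.X j :
        MvPolynomial (Fin m) (MvPolynomial σ k))) f)

/-- The leading monomial (exponent vector) of a polynomial with respect to the lexicographic
order where variables with smaller index in `σ` are larger (junk value `0` for `f = 0`). -/
noncomputable def leadM {k : Type*} [CommSemiring k] {σ : Type*}
    [LinearOrder σ] (f : MvPolynomial σ k) : Lex (σ →₀ ℕ) :=
  letI : DecidableEq (Lex (σ →₀ ℕ)) := Classical.decEq _
  WithBot.unbotD (toLex 0) ((f.support.image (toLex : (σ →₀ ℕ) → Lex (σ →₀ ℕ))).max)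

open Finset

namespace PolAux

variable {n m : ℕ}

abbrev σT (m n : ℕ) : Type := Lex (Fin m × Fin n)

noncomputable def φN (m n : ℕ) : Fin n → MvPolynomial (Fin m) (MvPolynomial (σT m n) ℕ) :=
  fun i => ∑ j : Fin m, C (X (toLex (j, i))) * X j

noncomputable def polN (a : Fin n →₀ ℕ) (κ : Fin m →₀ ℕ) : MvPolynomial (σT m n) ℕ :=
  MvPolynomial.coeff κ (aeval (φN m n) (monomial a 1))

def rowS (E : σT m n →₀ ℕ) (i : Fin n) : ℕ := ∑ j : Fin m, E (toLex (j, i))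
def colS (E : σT m n →₀ ℕ) (j : Fin m) : ℕ := ∑ i : Fin n, E (toLex (j, i))

def Margins (E : σT m n →₀ ℕ) (a : Fin n →₀ ℕ) (κ : Fin m →₀ ℕ) : Prop :=
  (∀ i, rowS E i = a i) ∧ (∀ j, colS E j = κ j)

lemma rowS_add (E F : σT m n →₀ ℕ) (i : Fin n) :
    rowS (E + F) i = rowS E i + rowS F i := by
  simp [rowS, Finset.sum_add_distrib]

lemma colS_add (E F : σT m n →₀ ℕ) (j : Fin m) :
    colS (E + F) j = colS E j + colS F j := by
  simp [colS, Finset.sum_add_distrib]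

lemma rowS_single (j : Fin m) (i i' : Fin n) (c : ℕ) :
    rowS (Finsupp.single (toLex (j, i)) c) i' = if i = i' then c else 0 := by
  classical
  simp only [rowS, Finsupp.single_apply]
  rcases eq_or_ne i i' with h | h
  · subst h
    rw [Finset.sum_eq_single j]
    · simp
    · intro b _ hb
      rw [if_neg]
      intro hcon
      exact hb (Prod.ext_iff.mp (toLex.injective hcon)).1.symm
    · simp
  · rw [if_neg h, Finset.sum_eq_zero]
    intro b _
    rw [if_neg]
    intro hcon
    exact h (Prod.ext_iff.mp (toLex.injective hcon)).2

lemma colS_single (j j' : Fin m) (i : Fin n) (c : ℕ) :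
    colS (Finsupp.single (toLex (j, i)) c) j' = if j = j' then c else 0 := by
  classical
  simp only [colS, Finsupp.single_apply]
  rcases eq_or_ne j j' with h | h
  · subst h
    rw [Finset.sum_eq_single i]
    · simp
    · intro b _ hb
      rw [if_neg]
      intro hcon
      exact hb (Prod.ext_iff.mp (toLex.injective hcon)).2.symm
    · simp
  · rw [if_neg h, Finset.sum_eq_zero]
    intro b _
    rw [if_neg]
    intro hcon
    exact h (Prod.ext_iff.mp (toLex.injective hcon)).1


lemma polN_step (i : Fin n) (a : Fin n →₀ ℕ) (κ : Fin m →₀ ℕ) :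
    polN (Finsupp.single i 1 + a) κ =
      ∑ j : Fin m, X (toLex (j, i)) *
        (if κ j ≠ 0 then polN a (κ - Finsupp.single j 1) else 0) := by
  classical
  unfold polN
  rw [monomial_single_add, pow_one, map_mul, aeval_X]
  show MvPolynomial.coeff κ ((φN m n i) * _) = _
  unfold φN
  rw [Finset.sum_mul, MvPolynomial.coeff_sum]
  apply Finset.sum_congr rfl
  intro j _
  rw [mul_assoc, coeff_C_mul, coeff_X_mul']
  simp only [Finsupp.mem_support_iff]

lemma coeff_polN_step (i : Fin n) (a : Fin n →₀ ℕ) (κ : Fin m →₀ ℕ) (E : σT m n →₀ ℕ) :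
    MvPolynomial.coeff E (polN (Finsupp.single i 1 + a) κ) =
      ∑ j : Fin m, if κ j ≠ 0 ∧ E (toLex (j, i)) ≠ 0 then
        MvPolynomial.coeff (E - Finsupp.single (toLex (j, i)) 1)
          (polN a (κ - Finsupp.single j 1)) else 0 := by
  classical
  rw [polN_step, MvPolynomial.coeff_sum]
  apply Finset.sum_congr rfl
  intro j _
  rw [coeff_X_mul']
  simp only [Finsupp.mem_support_iff]
  split_ifs with h1 h2 h3 <;> simp_all


lemma margins_step (i : Fin n) (a : Fin n →₀ ℕ) (κ : Fin m →₀ ℕ) (E : σT m n →₀ ℕ) :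
    Margins E (Finsupp.single i 1 + a) κ ↔
      ∃ j : Fin m, κ j ≠ 0 ∧ E (toLex (j, i)) ≠ 0 ∧
        Margins (E - Finsupp.single (toLex (j, i)) 1) a (κ - Finsupp.single j 1) := by
  classical
  constructor
  · rintro ⟨hr, hc⟩
    have hri : rowS E i ≠ 0 := by
      rw [hr i]; simp
    obtain ⟨j, -, hj⟩ := Finset.exists_ne_zero_of_sum_ne_zero hri
    have hEv : (1 : ℕ) ≤ E (toLex (j, i)) := Nat.one_le_iff_ne_zero.mpr hj
    have hle : Finsupp.single (toLex (j, i)) 1 ≤ E := Finsupp.single_le_iff.mpr hEv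
    have hEeq : (E - Finsupp.single (toLex (j, i)) 1) + Finsupp.single (toLex (j, i)) 1 = E :=
      tsub_add_cancel_of_le hle
    have hcj : E (toLex (j, i)) ≤ colS E j := by
      refine Finset.single_le_sum (f := fun i' => E (toLex (j, i'))) (fun _ _ => Nat.zero_le _) (Finset.mem_univ i)
    have hκj : κ j ≠ 0 := by
      rw [← hc j]; omega
    have hκle : Finsupp.single j 1 ≤ κ := Finsupp.single_le_iff.mpr (by omega)
    refine ⟨j, hκj, hj, ?_, ?_⟩
    · intro i'
      have h1 := rowS_add (E - Finsupp.single (toLex (j, i)) 1) (Finsupp.single (toLex (j, i)) 1) i'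
      rw [hEeq, hr i'] at h1
      rw [rowS_single] at h1
      simp only [Finsupp.add_apply, Finsupp.single_apply] at h1 ⊢
      rcases eq_or_ne i i' with h | h <;> simp [h] at h1 ⊢ <;> omega
    · intro j'
      have h1 := colS_add (E - Finsupp.single (toLex (j, i)) 1) (Finsupp.single (toLex (j, i)) 1) j'
      rw [hEeq, hc j'] at h1
      rw [colS_single] at h1
      simp only [Finsupp.tsub_apply, Finsupp.single_apply]
      rcases eq_or_ne j j' with h | h <;> simp [h] at h1 ⊢ <;> omega
  · rintro ⟨j, hκj, hj, hr, hc⟩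
    have hEv : (1 : ℕ) ≤ E (toLex (j, i)) := Nat.one_le_iff_ne_zero.mpr hj
    have hle : Finsupp.single (toLex (j, i)) 1 ≤ E := Finsupp.single_le_iff.mpr hEv
    have hEeq : (E - Finsupp.single (toLex (j, i)) 1) + Finsupp.single (toLex (j, i)) 1 = E :=
      tsub_add_cancel_of_le hle
    have hκle : Finsupp.single j 1 ≤ κ := Finsupp.single_le_iff.mpr (Nat.one_le_iff_ne_zero.mpr hκj)
    have hκeq : (κ - Finsupp.single j 1) + Finsupp.single j 1 = κ := tsub_add_cancel_of_le hκle
    constructor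
    · intro i'
      have h1 := rowS_add (E - Finsupp.single (toLex (j, i)) 1) (Finsupp.single (toLex (j, i)) 1) i'
      rw [hEeq, hr i', rowS_single] at h1
      simp only [Finsupp.add_apply, Finsupp.single_apply]
      rcases eq_or_ne i i' with h | h <;> simp [h] at h1 ⊢ <;> omega
    · intro j'
      have h1 := colS_add (E - Finsupp.single (toLex (j, i)) 1) (Finsupp.single (toLex (j, i)) 1) j'
      rw [hEeq, hc j', colS_single] at h1
      rw [Finsupp.tsub_apply] at h1
      simp only [Finsupp.single_apply] at h1
      rcases eq_or_ne j j' with rfl | h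
      · simp at h1 ⊢
        have : κ j ≠ 0 := hκj
        omega
      · simp [h] at h1 ⊢
        omega


lemma polN_zero (κ : Fin m →₀ ℕ) :
    polN (0 : Fin n →₀ ℕ) κ = if κ = 0 then 1 else 0 := by
  classical
  unfold polN
  have h1 : (monomial (0 : Fin n →₀ ℕ) (1 : ℕ)) = 1 := by simp
  rw [h1, map_one, MvPolynomial.coeff_one]
  simp [eq_comm]

lemma margins_zero (κ : Fin m →₀ ℕ) (E : σT m n →₀ ℕ) :
    Margins E (0 : Fin n →₀ ℕ) κ ↔ κ = 0 ∧ E = 0 := by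
  constructor
  · rintro ⟨hr, hc⟩
    have hE : E = 0 := by
      ext x
      have h1 : E (toLex ((ofLex x).1, (ofLex x).2)) ≤ rowS E (ofLex x).2 :=
        Finset.single_le_sum (f := fun j => E (toLex (j, (ofLex x).2)))
          (fun _ _ => Nat.zero_le _) (Finset.mem_univ (ofLex x).1)
      rw [hr] at h1
      simpa using h1
    subst hE
    refine ⟨?_, rfl⟩
    ext j
    rw [← hc j]
    simp [colS]
  · rintro ⟨rfl, rfl⟩
    refine ⟨fun i => ?_, fun j => ?_⟩ <;> simp [rowS, colS]

theorem coeff_polN_ne_zero_iff :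
    ∀ (N : ℕ) (a : Fin n →₀ ℕ), (∑ i, a i) = N → ∀ (κ : Fin m →₀ ℕ) (E : σT m n →₀ ℕ),
      (MvPolynomial.coeff E (polN a κ) ≠ 0 ↔ Margins E a κ) := by
  classical
  intro N
  induction N with
  | zero =>
    intro a ha κ E
    have ha0 : a = 0 := by
      ext i
      exact Finset.sum_eq_zero_iff.mp ha i (Finset.mem_univ i)
    subst ha0
    rw [polN_zero, margins_zero]
    split_ifs with h
    · subst h
      rw [MvPolynomial.coeff_one]
      split_ifs with h2 <;> simp [h2, eq_comm] <;> exact fun hc => h2 hc.symm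
    · simp [h]
  | succ N ih =>
    intro a ha κ E
    have hane : (∑ i, a i) ≠ 0 := by omega
    obtain ⟨i, -, hi⟩ := Finset.exists_ne_zero_of_sum_ne_zero hane
    set a' := a - Finsupp.single i 1 with ha'def
    have haa : a = Finsupp.single i 1 + a' := by
      ext i'
      simp only [ha'def, Finsupp.add_apply, Finsupp.tsub_apply, Finsupp.single_apply]
      rcases eq_or_ne i i' with rfl | h
      · simp
        omega
      · simp [h]
    have ha' : (∑ i', a' i') = N := by
      have h2 : (∑ i', ((Finsupp.single i 1 + a' : Fin n →₀ ℕ)) i') = N + 1 := by rw [← haa]; exact ha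
      simp only [Finsupp.add_apply, Finset.sum_add_distrib, Finsupp.single_apply] at h2
      rw [Finset.sum_ite_eq] at h2
      simp at h2
      omega
    rw [haa, margins_step]
    constructor
    · intro h
      obtain ⟨j, -, hj⟩ := Finset.exists_ne_zero_of_sum_ne_zero
        ((coeff_polN_step i a' κ E).symm ▸ h)
      split_ifs at hj with hcond
      · exact ⟨j, hcond.1, hcond.2, (ih a' ha' _ _).mp hj⟩
      · exact absurd rfl hj
    · rintro ⟨j, h1, h2, hmar⟩
      rw [coeff_polN_step]
      have hterm : (if κ j ≠ 0 ∧ E (toLex (j, i)) ≠ 0 then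
          MvPolynomial.coeff (E - Finsupp.single (toLex (j, i)) 1)
            (polN a' (κ - Finsupp.single j 1)) else 0) ≠ 0 := by
        rw [if_pos ⟨h1, h2⟩]
        exact (ih a' ha' _ _).mpr hmar
      intro hzero
      exact hterm (Finset.sum_eq_zero_iff.mp hzero j (Finset.mem_univ j))


/-! ### Partial sums and the greedy matrix -/

def ps {p : ℕ} (f : Fin p →₀ ℕ) (t : ℕ) : ℕ :=
  ∑ s ∈ Finset.range t, if h : s < p then f ⟨s, h⟩ else 0

lemma ps_mono {p : ℕ} (f : Fin p →₀ ℕ) : Monotone (ps f) := by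
  intro t1 t2 h
  exact Finset.sum_le_sum_of_subset (Finset.range_subset_range.mpr h)

lemma ps_zero {p : ℕ} (f : Fin p →₀ ℕ) : ps f 0 = 0 := rfl

lemma ps_succ_fin {p : ℕ} (f : Fin p →₀ ℕ) (i : Fin p) :
    ps f (↑i + 1) = ps f ↑i + f i := by
  rw [ps, Finset.sum_range_succ, dif_pos i.isLt]
  rfl

lemma ps_top {p : ℕ} (f : Fin p →₀ ℕ) : ps f p = ∑ i, f i := by
  rw [ps, ← Fin.sum_univ_eq_sum_range (fun s => if h : s < p then f ⟨s, h⟩ else 0) p]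
  apply Finset.sum_congr rfl
  intro i _
  rw [dif_pos i.isLt]

noncomputable def G (a : Fin n →₀ ℕ) (κ : Fin m →₀ ℕ) : σT m n →₀ ℕ :=
  Finsupp.equivFunOnFinite.symm fun x =>
    min (ps a ((ofLex x).2 + 1)) (ps κ ((ofLex x).1 + 1)) -
      max (ps a (ofLex x).2) (ps κ (ofLex x).1)

lemma G_apply (a : Fin n →₀ ℕ) (κ : Fin m →₀ ℕ) (j : Fin m) (i : Fin n) :
    G a κ (toLex (j, i)) =
      min (ps a (↑i + 1)) (ps κ (↑j + 1)) - max (ps a ↑i) (ps κ ↑j) := rfl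

lemma telescope (K : ℕ → ℕ) (hK : Monotone K) (x y : ℕ) (hxy : x ≤ y) (J : ℕ) :
    ∑ j ∈ Finset.range J, (min y (K (j + 1)) - max x (K j)) =
      min y (max x (K J)) - min y (max x (K 0)) := by
  have h1 : ∀ j, min y (K (j + 1)) - max x (K j) =
      min y (max x (K (j + 1))) - min y (max x (K j)) := by
    intro j
    have := hK (Nat.le_succ j)
    omega
  rw [Finset.sum_congr rfl fun j _ => h1 j]
  exact Finset.sum_range_tsub
    (fun j1 j2 h => min_le_min le_rfl (max_le_max le_rfl (hK h))) J

/-- partial row sums -/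
def prow (E : σT m n →₀ ℕ) (i : Fin n) (J : ℕ) : ℕ :=
  ∑ j ∈ Finset.range J, if h : j < m then E (toLex (⟨j, h⟩, i)) else 0

def pcol (E : σT m n →₀ ℕ) (j : Fin m) (I : ℕ) : ℕ :=
  ∑ i ∈ Finset.range I, if h : i < n then E (toLex (j, ⟨i, h⟩)) else 0

lemma prow_top (E : σT m n →₀ ℕ) (i : Fin n) : prow E i m = rowS E i := by
  rw [prow, rowS, ← Fin.sum_univ_eq_sum_range (fun j => if h : j < m then E (toLex (⟨j, h⟩, i)) else 0) m]
  exact Finset.sum_congr rfl fun j _ => by rw [dif_pos j.isLt]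

lemma pcol_top (E : σT m n →₀ ℕ) (j : Fin m) : pcol E j n = colS E j := by
  rw [pcol, colS, ← Fin.sum_univ_eq_sum_range (fun i => if h : i < n then E (toLex (j, ⟨i, h⟩)) else 0) n]
  exact Finset.sum_congr rfl fun i _ => by rw [dif_pos i.isLt]

lemma prow_succ_fin (E : σT m n →₀ ℕ) (i : Fin n) (j : Fin m) :
    prow E i (↑j + 1) = prow E i ↑j + E (toLex (j, i)) := by
  rw [prow, Finset.sum_range_succ, dif_pos j.isLt]
  rfl

lemma pcol_succ_fin (E : σT m n →₀ ℕ) (j : Fin m) (i : Fin n) :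
    pcol E j (↑i + 1) = pcol E j ↑i + E (toLex (j, i)) := by
  rw [pcol, Finset.sum_range_succ, dif_pos i.isLt]
  rfl

lemma prow_mono (E : σT m n →₀ ℕ) (i : Fin n) : Monotone (prow E i) :=
  fun _ _ h => Finset.sum_le_sum_of_subset (Finset.range_subset_range.mpr h)

lemma pcol_mono (E : σT m n →₀ ℕ) (j : Fin m) : Monotone (pcol E j) :=
  fun _ _ h => Finset.sum_le_sum_of_subset (Finset.range_subset_range.mpr h)

lemma prow_G (a : Fin n →₀ ℕ) (κ : Fin m →₀ ℕ) (i : Fin n) {J : ℕ} (hJ : J ≤ m) :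
    prow (G a κ) i J = min (ps a (↑i + 1)) (max (ps a ↑i) (ps κ J)) - ps a ↑i := by
  rw [prow]
  have h1 : ∀ j ∈ Finset.range J, (if h : j < m then G a κ (toLex (⟨j, h⟩, i)) else 0) =
      min (ps a (↑i + 1)) (ps κ (j + 1)) - max (ps a ↑i) (ps κ j) := by
    intro j hj
    rw [dif_pos (lt_of_lt_of_le (Finset.mem_range.mp hj) hJ)]
    rw [G_apply]
  rw [Finset.sum_congr rfl h1, telescope (ps κ) (ps_mono κ) _ _
    (ps_mono a (Nat.le_succ _)) J]
  rw [ps_zero, Nat.max_zero, min_eq_right (ps_mono a (Nat.le_succ ↑i))]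

lemma pcol_G (a : Fin n →₀ ℕ) (κ : Fin m →₀ ℕ) (j : Fin m) {I : ℕ} (hI : I ≤ n) :
    pcol (G a κ) j I = min (ps κ (↑j + 1)) (max (ps κ ↑j) (ps a I)) - ps κ ↑j := by
  rw [pcol]
  have h1 : ∀ i ∈ Finset.range I, (if h : i < n then G a κ (toLex (j, ⟨i, h⟩)) else 0) =
      min (ps κ (↑j + 1)) (ps a (i + 1)) - max (ps κ ↑j) (ps a i) := by
    intro i hi
    rw [dif_pos (lt_of_lt_of_le (Finset.mem_range.mp hi) hI)]
    rw [G_apply]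
    simp only [Fin.val_mk]
    rw [min_comm, max_comm]
  rw [Finset.sum_congr rfl h1, telescope (ps a) (ps_mono a) _ _
    (ps_mono κ (Nat.le_succ _)) I]
  rw [ps_zero, Nat.max_zero, min_eq_right (ps_mono κ (Nat.le_succ ↑j))]

lemma margins_G (a : Fin n →₀ ℕ) (κ : Fin m →₀ ℕ) (htot : ∑ i, a i = ∑ j, κ j) :
    Margins (G a κ) a κ := by
  constructor
  · intro i
    rw [← prow_top, prow_G a κ i le_rfl]
    have h1 : ps a (↑i + 1) ≤ ps κ m := by
      rw [ps_top, ← htot, ← ps_top a]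
      exact ps_mono a i.isLt
    have h2 := ps_succ_fin a i
    omega
  · intro j
    rw [← pcol_top, pcol_G a κ j le_rfl]
    have h1 : ps κ (↑j + 1) ≤ ps a n := by
      rw [ps_top, htot, ← ps_top κ]
      exact ps_mono κ j.isLt
    have h2 := ps_succ_fin κ j
    omega


lemma toLex_le_G (a : Fin n →₀ ℕ) (κ : Fin m →₀ ℕ) (E : σT m n →₀ ℕ)
    (hE : Margins E a κ) : toLex E ≤ toLex (G a κ) := by
  by_contra hcon
  rw [not_le] at hcon
  rw [Finsupp.Lex.lt_iff] at hcon
  obtain ⟨s, hlow, hs⟩ := hcon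
  set j0 : Fin m := (ofLex s).1 with hj0
  set i0 : Fin n := (ofLex s).2 with hi0
  have hseq : s = toLex (j0, i0) := rfl
  -- partial row sums agree below s
  have hrow_eq : prow E i0 ↑j0 = prow (G a κ) i0 ↑j0 := by
    apply Finset.sum_congr rfl
    intro j hj
    have hjm : j < m := lt_trans (Finset.mem_range.mp hj) j0.isLt
    rw [dif_pos hjm, dif_pos hjm]
    have : toLex ((⟨j, hjm⟩ : Fin m), i0) < s := by
      rw [hseq]
      rw [Prod.Lex.lt_iff]
      left
      exact Finset.mem_range.mp hj
    exact (hlow _ this).symm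
  have hcol_eq : pcol E j0 ↑i0 = pcol (G a κ) j0 ↑i0 := by
    apply Finset.sum_congr rfl
    intro i hi
    have hin : i < n := lt_trans (Finset.mem_range.mp hi) i0.isLt
    rw [dif_pos hin, dif_pos hin]
    have : toLex (j0, (⟨i, hin⟩ : Fin n)) < s := by
      rw [hseq, Prod.Lex.lt_iff]
      right
      exact ⟨rfl, Finset.mem_range.mp hi⟩
    exact (hlow _ this).symm
  have hrow_bound : prow E i0 (↑j0 + 1) ≤ rowS E i0 := by
    rw [← prow_top]
    exact prow_mono E i0 j0.isLt
  have hcol_bound : pcol E j0 (↑i0 + 1) ≤ colS E j0 := by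
    rw [← pcol_top]
    exact pcol_mono E j0 i0.isLt
  rw [prow_succ_fin, hE.1 i0, hrow_eq, prow_G a κ i0 (le_of_lt j0.isLt)] at hrow_bound
  rw [pcol_succ_fin, hE.2 j0, hcol_eq, pcol_G a κ j0 (le_of_lt i0.isLt)] at hcol_bound
  have hEs : G a κ (toLex (j0, i0)) < E (toLex (j0, i0)) := hs
  rw [G_apply] at hEs
  have h1 := ps_succ_fin a i0
  have h2 := ps_succ_fin κ j0
  have hxy : ps a ↑i0 ≤ ps a (↑i0 + 1) := ps_mono a (Nat.le_succ _)
  have huw : ps κ ↑j0 ≤ ps κ (↑j0 + 1) := ps_mono κ (Nat.le_succ _)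
  omega

lemma G_mono (a a' : Fin n →₀ ℕ) (κ : Fin m →₀ ℕ)
    (htot : ∑ i, a i = ∑ j, κ j) (htot' : ∑ i, a' i = ∑ j, κ j)
    (hlt : toLex a' < toLex a) : toLex (G a' κ) < toLex (G a κ) := by
  rw [Finsupp.Lex.lt_iff] at hlt ⊢
  obtain ⟨i0, hlow', hi0'⟩ := hlt
  have hlow : ∀ i : Fin n, i < i0 → a' i = a i := fun i hi => hlow' i hi
  have hi0 : a' i0 < a i0 := hi0'
  have hA : ∀ t, t ≤ ↑i0 → ps a' t = ps a t := by
    intro t ht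
    apply Finset.sum_congr rfl
    intro s hsr
    have hsr' := Finset.mem_range.mp hsr
    have hi0n := i0.isLt
    have hsn : s < n := by omega
    rw [dif_pos hsn, dif_pos hsn]
    have hsi : (⟨s, hsn⟩ : Fin n) < i0 := by
      rw [Fin.lt_def]
      simp only [Fin.val_mk]
      omega
    exact hlow ⟨s, hsn⟩ hsi
  have hAi0 : ps a' ↑i0 = ps a ↑i0 := hA ↑i0 le_rfl
  set x := ps a' (↑i0 + 1) with hxdef
  have hxa : x < ps a (↑i0 + 1) := by
    have h1 := ps_succ_fin a' i0
    have h2 := ps_succ_fin a i0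
    omega
  have hxKm : x < ps κ m := by
    have h1 : ps a (↑i0 + 1) ≤ ps a n := ps_mono a i0.isLt
    rw [ps_top, htot, ← ps_top κ] at h1
    omega
  have hP0 : ps κ 0 ≤ x := by rw [ps_zero]; exact Nat.zero_le x
  set jn := Nat.findGreatest (fun j => ps κ j ≤ x) m with hjn
  have hPj : ps κ jn ≤ x :=
    Nat.findGreatest_spec (P := fun j => ps κ j ≤ x) (Nat.zero_le m) hP0
  have hjm : jn < m := by
    rcases lt_or_eq_of_le (Nat.findGreatest_le (P := fun j => ps κ j ≤ x) m) with h | h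
    · exact h
    · rw [hjn, h] at hPj
      omega
  have hK1 : ¬ ps κ (jn + 1) ≤ x :=
    Nat.findGreatest_is_greatest (P := fun j => ps κ j ≤ x) (n := m)
      (Nat.lt_succ_self _) hjm
  refine ⟨toLex ((⟨jn, hjm⟩ : Fin m), i0), ?_, ?_⟩
  · intro r hr
    have hrlt := (Prod.Lex.lt_iff (x := r) (y := toLex ((⟨jn, hjm⟩ : Fin m), i0))).mp hr
    show G a' κ r = G a κ r
    have hreq : r = toLex ((ofLex r).1, (ofLex r).2) := rfl
    set j : Fin m := (ofLex r).1
    set i : Fin n := (ofLex r).2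
    rw [hreq, G_apply, G_apply]
    rcases lt_trichotomy i i0 with hii | hii | hii
    · -- i < i0 : partial sums agree
      rw [hA ↑i (le_of_lt hii), hA (↑i + 1) hii]
    · -- i = i0
      rcases hrlt with hj | ⟨hj, hcon⟩
      · -- j < jn
        have hKj1 : ps κ (↑j + 1) ≤ ps κ jn := ps_mono κ hj
        have hKjj : ps κ ↑j ≤ ps κ (↑j + 1) := ps_mono κ (Nat.le_succ _)
        have e1 : ps a' ↑i = ps a ↑i := by rw [hii]; exact hAi0
        have e2 : ps a' (↑i + 1) = x := by rw [hxdef, hii]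
        have e4 : x < ps a (↑i + 1) := by rw [hii]; exact hxa
        have e5 : ps a' ↑i ≤ ps a' (↑i + 1) := ps_mono a' (Nat.le_succ _)
        omega
      · exfalso
        have hcon' : i < i0 := hcon
        rw [hii] at hcon'
        exact lt_irrefl i0 hcon'
    · -- i > i0 : both sides are 0; needs j < jn
      rcases hrlt with hj | ⟨hj, hcon⟩
      · have hKj1 : ps κ (↑j + 1) ≤ ps κ jn := ps_mono κ hj
        have h1 : x ≤ ps a' ↑i := ps_mono a' hii
        have h2 : ps a (↑i0 + 1) ≤ ps a ↑i := ps_mono a hii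
        have h3 : ps a' ↑i ≤ ps a' (↑i + 1) := ps_mono a' (Nat.le_succ _)
        have h4 : ps a ↑i ≤ ps a (↑i + 1) := ps_mono a (Nat.le_succ _)
        omega
      · exfalso
        have hcon' : i < i0 := hcon
        exact lt_irrefl i0 (lt_trans hii hcon')
  · show G a' κ _ < G a κ _
    rw [G_apply, G_apply]
    simp only [Fin.val_mk]
    have h1 : ps a ↑i0 ≤ x := by
      rw [← hAi0, hxdef]
      exact ps_mono a' (Nat.le_succ _)
    omega


lemma margins_tot (E : σT m n →₀ ℕ) (a : Fin n →₀ ℕ) (κ : Fin m →₀ ℕ)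
    (h : Margins E a κ) : ∑ i, a i = ∑ j, κ j := by
  calc ∑ i, a i = ∑ i, rowS E i := by
        exact Finset.sum_congr rfl fun i _ => (h.1 i).symm
    _ = ∑ j, colS E j := by
        show (∑ i : Fin n, ∑ j : Fin m, E (toLex (j, i))) = ∑ j : Fin m, ∑ i : Fin n, E (toLex (j, i))
        exact Finset.sum_comm
    _ = ∑ j, κ j := Finset.sum_congr rfl fun j _ => h.2 j

end PolAux

lemma leadM_eq_of {σ' : Type*} [LinearOrder σ'] {R : Type*} [CommSemiring R]
    (f : MvPolynomial σ' R) (d : σ' →₀ ℕ) (hd : d ∈ f.support)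
    (hmax : ∀ e ∈ f.support, toLex e ≤ toLex d) : leadM f = toLex d := by
  letI : DecidableEq (Lex (σ' →₀ ℕ)) := Classical.decEq _
  unfold leadM
  have h1 : (f.support.image (toLex : (σ' →₀ ℕ) → Lex (σ' →₀ ℕ))).max = (toLex d : Lex (σ' →₀ ℕ)) := by
    apply le_antisymm
    · apply Finset.max_le
      intro y hy
      obtain ⟨e, he, rfl⟩ := Finset.mem_image.mp hy
      exact WithBot.coe_le_coe.mpr (hmax e he)
    · exact Finset.le_max (Finset.mem_image_of_mem _ hd)
  rw [h1]
  rfl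

lemma leadM_congr {k1 k2 : Type*} [CommSemiring k1] [CommSemiring k2] {σ' : Type*} [LinearOrder σ']
    (f : MvPolynomial σ' k1) (g : MvPolynomial σ' k2) (h : f.support = g.support) :
    leadM f = leadM g := by
  unfold leadM
  rw [h]

namespace PolAux

lemma polN_eq_Pol (a : Fin n →₀ ℕ) (κ : Fin m → ℕ) :
    Pol (fun i j => toLex (j, i) : Fin n → Fin m → σT m n) (monomial a (1 : ℕ)) κ =
      polN a (Finsupp.equivFunOnFinite.symm κ) := rfl

lemma Pol_eq_map (k : Type) [CommSemiring k] (a : Fin n →₀ ℕ) (κ : Fin m → ℕ) :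
    Pol (fun i j => toLex (j, i) : Fin n → Fin m → σT m n) (monomial a (1 : k)) κ =
      MvPolynomial.map (Nat.castRingHom k) (polN a (Finsupp.equivFunOnFinite.symm κ)) := by
  have hhom :
      (MvPolynomial.map (MvPolynomial.map (Nat.castRingHom k) :
          MvPolynomial (σT m n) ℕ →+* MvPolynomial (σT m n) k) :
            MvPolynomial (Fin m) (MvPolynomial (σT m n) ℕ) →+*
              MvPolynomial (Fin m) (MvPolynomial (σT m n) k)).comp
        (aeval (φN m n)).toRingHom =
      ((aeval fun i : Fin n => ∑ j : Fin m, (C (X (toLex (j, i))) * X j :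
          MvPolynomial (Fin m) (MvPolynomial (σT m n) k))).toRingHom).comp
        (MvPolynomial.map (Nat.castRingHom k) : MvPolynomial (Fin n) ℕ →+* MvPolynomial (Fin n) k) := by
    apply MvPolynomial.ringHom_ext
    · intro r
      simp [φN]
    · intro i
      simp [φN]
  have happ := RingHom.congr_fun hhom (monomial a (1 : ℕ))
  simp only [RingHom.coe_comp, Function.comp_apply, AlgHom.toRingHom_eq_coe,
    RingHom.coe_coe, MvPolynomial.map_monomial, map_one] at happ
  show MvPolynomial.coeff _ (aeval _ (monomial a (1 : k))) = _
  rw [← happ]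
  rw [polN]
  rw [MvPolynomial.coeff_map]

end PolAux

/-- over a field of characteristic zero, if `M' < M` are monomials of
`k[x₁,…,xₙ]` in the lex order with `x₁ > ⋯ > xₙ`, then for any `κ ∈ ℕᵐ` with
`Pol_κ(M) ≠ 0` and `Pol_κ(M') ≠ 0` one has `LeadM(Pol_κ(M')) < LeadM(Pol_κ(M))`
in the lex order on `k[x_i^{(j)}]` with
`x₁^{(1)} > x₂^{(1)} > ⋯ > xₙ^{(1)} > x₁^{(2)} > ⋯ > xₙ^{(m)}` (variables ordered first by
the copy index `j`, then by `i`). -/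

theorem leadM_pol_lt_of_lt_alt_order (k : Type) [Field k] [CharZero k] (n m : ℕ)
    (a a' : Fin n →₀ ℕ) (hlt : toLex a' < toLex a) (κ : Fin m → ℕ)
    (hM : Pol (fun i j => toLex (j, i) : Fin n → Fin m → Lex (Fin m × Fin n))
      (monomial a (1 : k)) κ ≠ 0)
    (hM' : Pol (fun i j => toLex (j, i) : Fin n → Fin m → Lex (Fin m × Fin n))
      (monomial a' (1 : k)) κ ≠ 0) :
    leadM (Pol (fun i j => toLex (j, i) : Fin n → Fin m → Lex (Fin m × Fin n))
        (monomial a' (1 : k)) κ) <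
      leadM (Pol (fun i j => toLex (j, i) : Fin n → Fin m → Lex (Fin m × Fin n))
        (monomial a (1 : k)) κ) := by
  classical
  set kh : Fin m →₀ ℕ := Finsupp.equivFunOnFinite.symm κ with hkh
  rw [PolAux.Pol_eq_map k a κ] at hM ⊢
  rw [PolAux.Pol_eq_map k a' κ] at hM' ⊢
  set P : MvPolynomial (PolAux.σT m n) ℕ := PolAux.polN a kh with hP
  set P' : MvPolynomial (PolAux.σT m n) ℕ := PolAux.polN a' kh with hP'
  have hcastinj : Function.Injective ⇑(Nat.castRingHom k) := fun x y h => by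
    exact Nat.cast_injective h
  have hsupp : (MvPolynomial.map (Nat.castRingHom k) P).support = P.support :=
    MvPolynomial.support_map_of_injective P hcastinj
  have hsupp' : (MvPolynomial.map (Nat.castRingHom k) P').support = P'.support :=
    MvPolynomial.support_map_of_injective P' hcastinj
  have hPne : P ≠ 0 := by
    intro h
    rw [h, map_zero] at hM
    exact hM rfl
  have hPne' : P' ≠ 0 := by
    intro h
    rw [h, map_zero] at hM'
    exact hM' rfl
  -- totals
  obtain ⟨E, hE⟩ := MvPolynomial.ne_zero_iff.mp hPne
  have htot : ∑ i, a i = ∑ j, kh j :=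
    PolAux.margins_tot E a kh
      ((PolAux.coeff_polN_ne_zero_iff (∑ i, a i) a rfl kh E).mp hE)
  obtain ⟨E', hE'⟩ := MvPolynomial.ne_zero_iff.mp hPne'
  have htot' : ∑ i, a' i = ∑ j, kh j :=
    PolAux.margins_tot E' a' kh
      ((PolAux.coeff_polN_ne_zero_iff (∑ i, a' i) a' rfl kh E').mp hE')
  -- leading monomials
  have hlead : leadM (MvPolynomial.map (Nat.castRingHom k) P) = toLex (PolAux.G a kh) := by
    rw [leadM_congr _ P hsupp]
    apply leadM_eq_of
    · rw [MvPolynomial.mem_support_iff]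
      exact (PolAux.coeff_polN_ne_zero_iff (∑ i, a i) a rfl kh _).mpr
        (PolAux.margins_G a kh htot)
    · intro e he
      rw [MvPolynomial.mem_support_iff] at he
      exact PolAux.toLex_le_G a kh e
        ((PolAux.coeff_polN_ne_zero_iff (∑ i, a i) a rfl kh e).mp he)
  have hlead' : leadM (MvPolynomial.map (Nat.castRingHom k) P') = toLex (PolAux.G a' kh) := by
    rw [leadM_congr _ P' hsupp']
    apply leadM_eq_of
    · rw [MvPolynomial.mem_support_iff]
      exact (PolAux.coeff_polN_ne_zero_iff (∑ i, a' i) a' rfl kh _).mpr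
        (PolAux.margins_G a' kh htot')
    · intro e he
      rw [MvPolynomial.mem_support_iff] at he
      exact PolAux.toLex_le_G a' kh e
        ((PolAux.coeff_polN_ne_zero_iff (∑ i, a' i) a' rfl kh e).mp he)
  rw [hlead, hlead']
  exact PolAux.G_mono a a' kh htot htot' hlt
end

section
/- Assume char(k) = 0 and let G ≤ S_n be a permutation group acting naturally on V = k^n. Let f ∈ I(G,V) be a nonzero element of the Hilbert ideal. Then for every k = (k_1,…,k_m) ∈ ℕ^m with Pol_k(LeadM(f)) ≠ 0, the leading monomial LeadM(Pol_k(LeadM(f))) belongs to the lead term ideal Lead(I(G,V^m)), where leading monomials in k[V^m] are taken with respect to the lexicographic order with x_1^{(1)} > x_1^{(2)} > … > x_1^{(m)} > x_2^{(1)} > … > x_n^{(m)}. -/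
open MvPolynomial

/-- The lead term ideal of an ideal `I`: the ideal generated by the leading monomials of
all nonzero elements of `I`. -/
noncomputable def leadIdeal {k : Type*} [CommSemiring k] {σ : Type*} [LinearOrder σ]
    (I : Ideal (MvPolynomial σ k)) : Ideal (MvPolynomial σ k) :=
  Ideal.span {p | ∃ f ∈ I, f ≠ 0 ∧ p = monomial (ofLex (leadM f)) (1 : k)}

namespace PolAux
open Finset


variable {n m : ℕ}

/-- Extend a `Fin n`-indexed family to `ℕ` by zero. -/
def pad (n : ℕ) (μ : Fin n → ℕ) (t : ℕ) : ℕ := if h : t < n then μ ⟨t, h⟩ else 0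

lemma pad_coe (μ : Fin n → ℕ) (i : Fin n) : pad n μ (i : ℕ) = μ i := by
  simp [pad, i.isLt]

/-- Partial sums. -/
def psum (n : ℕ) (μ : Fin n → ℕ) (i : ℕ) : ℕ := ∑ t ∈ Finset.range i, pad n μ t

lemma psum_mono (μ : Fin n → ℕ) : Monotone (psum n μ) := fun i j hij =>
  Finset.sum_le_sum_of_subset (Finset.range_subset_range.2 hij)

lemma psum_succ (μ : Fin n → ℕ) (i : ℕ) : psum n μ (i+1) = psum n μ i + pad n μ i :=
  Finset.sum_range_succ _ _

lemma psum_zero (μ : Fin n → ℕ) : psum n μ 0 = 0 := rfl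

lemma psum_top (μ : Fin n → ℕ) : psum n μ n = ∑ i : Fin n, μ i := by
  rw [psum, ← Fin.sum_univ_eq_sum_range]
  exact Finset.sum_congr rfl fun i _ => pad_coe μ i

/-- The northwest corner rule matrix. -/
def nw (μ : Fin n → ℕ) (κ : Fin m → ℕ) (i j : ℕ) : ℕ :=
  (min (psum n μ (i+1)) (psum m κ (j+1)) + min (psum n μ i) (psum m κ j))
    - (min (psum n μ i) (psum m κ (j+1)) + min (psum n μ (i+1)) (psum m κ j))

lemma nw_cast (μ : Fin n → ℕ) (κ : Fin m → ℕ) (i j : ℕ) :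
    (nw μ κ i j : ℤ) =
      min (psum n μ (i+1) : ℤ) (psum m κ (j+1)) + min (psum n μ i : ℤ) (psum m κ j)
        - (min (psum n μ i : ℤ) (psum m κ (j+1)) + min (psum n μ (i+1) : ℤ) (psum m κ j)) := by
  have ha : psum n μ i ≤ psum n μ (i+1) := psum_mono μ (Nat.le_succ i)
  have hb : psum m κ j ≤ psum m κ (j+1) := psum_mono κ (Nat.le_succ j)
  have h : min (psum n μ i) (psum m κ (j+1)) + min (psum n μ (i+1)) (psum m κ j)
      ≤ min (psum n μ (i+1)) (psum m κ (j+1)) + min (psum n μ i) (psum m κ j) := by omega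
  rw [nw, Nat.cast_sub h]
  push_cast [Nat.cast_min]
  ring

/-- Partial row sums of `nw`, in `ℤ`. -/
lemma nw_rowpsum (μ : Fin n → ℕ) (κ : Fin m → ℕ) (i j : ℕ) :
    ∑ t ∈ range j, (nw μ κ i t : ℤ) =
      min (psum n μ (i+1) : ℤ) (psum m κ j) - min (psum n μ i : ℤ) (psum m κ j) := by
  set f : ℕ → ℤ := fun s => min (psum n μ (i+1) : ℤ) (psum m κ s) - min (psum n μ i : ℤ) (psum m κ s) with hf
  have h1 : ∀ t, (nw μ κ i t : ℤ) = f (t+1) - f t := by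
    intro t; rw [hf]; simp only []; rw [nw_cast]; ring
  calc ∑ t ∈ range j, (nw μ κ i t : ℤ) = ∑ t ∈ range j, (f (t+1) - f t) :=
        Finset.sum_congr rfl fun t _ => h1 t
    _ = f j - f 0 := Finset.sum_range_sub f j
    _ = _ := by rw [hf]; simp [psum_zero]

lemma nw_symm (μ : Fin n → ℕ) (κ : Fin m → ℕ) (i j : ℕ) : nw μ κ i j = nw κ μ j i := by
  unfold nw
  rw [min_comm (psum m κ (j+1)) (psum n μ (i+1)), min_comm (psum m κ j) (psum n μ i),
    min_comm (psum m κ j) (psum n μ (i+1)), min_comm (psum m κ (j+1)) (psum n μ i)]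
  omega

lemma nw_colpsum (μ : Fin n → ℕ) (κ : Fin m → ℕ) (i j : ℕ) :
    ∑ t ∈ range i, (nw μ κ t j : ℤ) =
      min (psum m κ (j+1) : ℤ) (psum n μ i) - min (psum m κ j : ℤ) (psum n μ i) := by
  have : ∀ t, nw μ κ t j = nw κ μ j t := fun t => nw_symm μ κ t j
  simp_rw [this]
  exact nw_rowpsum κ μ j i

lemma nw_row_sum (μ : Fin n → ℕ) (κ : Fin m → ℕ) (htot : psum n μ n ≤ psum m κ m) (i : Fin n) :
    ∑ j : Fin m, nw μ κ (i : ℕ) (j : ℕ) = μ i := by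
  have h1 : psum n μ ((i:ℕ)+1) ≤ psum m κ m :=
    le_trans (psum_mono μ i.isLt) htot
  have h2 : psum n μ (i:ℕ) ≤ psum m κ m := le_trans (psum_mono μ (Nat.le_succ _)) h1
  have := nw_rowpsum μ κ (i : ℕ) m
  have hcast : ((∑ j : Fin m, nw μ κ (i : ℕ) (j : ℕ) : ℕ) : ℤ) = (μ i : ℤ) := by
    push_cast
    rw [Fin.sum_univ_eq_sum_range (fun t => (nw μ κ (i:ℕ) t : ℤ)) m, this]
    rw [min_eq_left (by exact_mod_cast h1), min_eq_left (by exact_mod_cast h2)]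
    have := psum_succ μ (i : ℕ)
    have := pad_coe μ i
    omega
  exact_mod_cast hcast

lemma nw_col_sum (μ : Fin n → ℕ) (κ : Fin m → ℕ) (htot : psum m κ m ≤ psum n μ n) (j : Fin m) :
    ∑ i : Fin n, nw μ κ (i : ℕ) (j : ℕ) = κ j := by
  have : ∀ i : Fin n, nw μ κ (i:ℕ) (j:ℕ) = nw κ μ (j:ℕ) (i:ℕ) := fun t => nw_symm μ κ t j
  simp_rw [this]
  exact nw_row_sum κ μ htot j

/-- The greedy property of the northwest corner rule. -/
lemma nw_greedy (μ : Fin n → ℕ) (κ : Fin m → ℕ) (i j : ℕ) :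
    (nw μ κ i j : ℤ) =
      min ((pad n μ i : ℤ) - ∑ t ∈ range j, (nw μ κ i t : ℤ))
        ((pad m κ j : ℤ) - ∑ t ∈ range i, (nw μ κ t j : ℤ)) := by
  rw [nw_rowpsum, nw_colpsum, nw_cast]
  have ha : (psum n μ i : ℤ) ≤ psum n μ (i+1) := by exact_mod_cast psum_mono μ (Nat.le_succ i)
  have hb : (psum m κ j : ℤ) ≤ psum m κ (j+1) := by exact_mod_cast psum_mono κ (Nat.le_succ j)
  have hpa : (pad n μ i : ℤ) = psum n μ (i+1) - psum n μ i := by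
    have := psum_succ μ i; omega
  have hpb : (pad m κ j : ℤ) = psum m κ (j+1) - psum m κ j := by
    have := psum_succ κ j; omega
  rw [hpa, hpb]
  omega

/-- Sum over `Fin` elements below `j` equals sum over `range j`. -/
lemma sum_filter_lt {M : Type*} [AddCommMonoid M] {m : ℕ} (g : ℕ → M) (j : Fin m) :
    ∑ j' ∈ Finset.univ.filter (fun j' : Fin m => j' < j), g (j' : ℕ)
      = ∑ t ∈ range (j : ℕ), g t := by
  classical
  rw [Finset.sum_filter]
  simp only [Fin.lt_def]
  rw [Fin.sum_univ_eq_sum_range (fun t => if t < (j:ℕ) then g t else 0) m, ← Finset.sum_filter]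
  congr 1
  ext t
  simp only [Finset.mem_filter, Finset.mem_range]
  omega

/-- The northwest corner matrix as a `Finsupp` on `Lex (Fin n × Fin m)`. -/
noncomputable def W (μ : Fin n → ℕ) (κ : Fin m → ℕ) : Lex (Fin n × Fin m) →₀ ℕ :=
  Finsupp.equivFunOnFinite.symm (fun p => nw μ κ ((ofLex p).1 : ℕ) ((ofLex p).2 : ℕ))

lemma W_apply (μ : Fin n → ℕ) (κ : Fin m → ℕ) (i : Fin n) (j : Fin m) :
    W μ κ (toLex (i, j)) = nw μ κ (i : ℕ) (j : ℕ) := rfl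

/-- The margins condition. -/
def Marg (e : Lex (Fin n × Fin m) →₀ ℕ) (μ : Fin n → ℕ) (κ : Fin m → ℕ) : Prop :=
  (∀ i, ∑ j, e (toLex (i, j)) = μ i) ∧ (∀ j, ∑ i, e (toLex (i, j)) = κ j)

lemma marg_total {e : Lex (Fin n × Fin m) →₀ ℕ} {μ : Fin n → ℕ} {κ : Fin m → ℕ}
    (h : Marg e μ κ) : psum n μ n = psum m κ m := by
  rw [psum_top, psum_top, ← Finset.sum_congr rfl fun i _ => (h.1 i),
    ← Finset.sum_congr rfl fun j _ => (h.2 j), Finset.sum_comm]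

lemma marg_W {μ : Fin n → ℕ} {κ : Fin m → ℕ} (htot : psum n μ n = psum m κ m) :
    Marg (W μ κ) μ κ :=
  ⟨fun i => by simp only [W_apply]; exact nw_row_sum μ κ htot.le i,
   fun j => by simp only [W_apply]; exact nw_col_sum μ κ htot.ge j⟩

/-- Every matrix with margins `(μ, κ)` is lexicographically at most the NW corner matrix. -/
lemma le_W {e : Lex (Fin n × Fin m) →₀ ℕ} {μ : Fin n → ℕ} {κ : Fin m → ℕ}
    (h : Marg e μ κ) : toLex e ≤ toLex (W μ κ) := by
  classical
  rcases eq_or_ne e (W μ κ) with rfl | hne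
  · exact le_refl _
  refine le_of_lt (Finsupp.Lex.lt_iff.mpr ?_)
  have hs : (Finset.univ.filter (fun p : Lex (Fin n × Fin m) => e p ≠ W μ κ p)).Nonempty := by
    by_contra hc
    rw [Finset.not_nonempty_iff_eq_empty, Finset.filter_eq_empty_iff] at hc
    exact hne (Finsupp.ext fun p => not_ne_iff.mp (hc (Finset.mem_univ p)))
  set p := (Finset.univ.filter (fun p : Lex (Fin n × Fin m) => e p ≠ W μ κ p)).min' hs with hp
  have hpmem : e p ≠ W μ κ p := by
    have := Finset.min'_mem _ hs
    rw [Finset.mem_filter] at this; exact this.2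
  have hagree : ∀ q, q < p → e q = W μ κ q := by
    intro q hq
    by_contra hqne
    exact absurd (Finset.min'_le _ q (Finset.mem_filter.mpr ⟨Finset.mem_univ q, hqne⟩))
      (not_le.mpr hq)
  refine ⟨p, hagree, ?_⟩
  -- now show e p < W μ κ p
  set i : Fin n := (ofLex p).1 with hi
  set j : Fin m := (ofLex p).2 with hj
  have hplex : p = toLex (i, j) := rfl
  -- agreement on earlier cells of the same row / column
  have hrowa : ∀ j' : Fin m, j' < j → e (toLex (i, j')) = W μ κ (toLex (i, j')) := by
    intro j' hj'
    exact hagree _ (by rw [hplex]; exact Prod.Lex.lt_iff.mpr (Or.inr ⟨rfl, hj'⟩))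
  have hcola : ∀ i' : Fin n, i' < i → e (toLex (i', j)) = W μ κ (toLex (i', j)) := by
    intro i' hi'
    exact hagree _ (by rw [hplex]; exact Prod.Lex.lt_iff.mpr (Or.inl hi'))
  -- partial row sums of e bounded
  have hnotmemr : j ∉ Finset.univ.filter (fun j' : Fin m => j' < j) := by
    intro hmem; rw [Finset.mem_filter] at hmem; exact lt_irrefl _ hmem.2
  have hnotmemc : i ∉ Finset.univ.filter (fun i' : Fin n => i' < i) := by
    intro hmem; rw [Finset.mem_filter] at hmem; exact lt_irrefl _ hmem.2
  have hrowle : e (toLex (i, j)) + ∑ j' ∈ Finset.univ.filter (fun j' : Fin m => j' < j),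
      e (toLex (i, j')) ≤ μ i :=
    calc e (toLex (i, j)) + ∑ j' ∈ Finset.univ.filter (fun j' : Fin m => j' < j),
          e (toLex (i, j'))
        = ∑ x ∈ insert j (Finset.univ.filter (fun j' : Fin m => j' < j)), e (toLex (i, x)) :=
          (Finset.sum_insert (f := fun x => e (toLex (i, x))) hnotmemr).symm
      _ ≤ ∑ x : Fin m, e (toLex (i, x)) :=
          Finset.sum_le_sum_of_subset (Finset.subset_univ _)
      _ = μ i := h.1 i
  have hcolle : e (toLex (i, j)) + ∑ i' ∈ Finset.univ.filter (fun i' : Fin n => i' < i),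
      e (toLex (i', j)) ≤ κ j :=
    calc e (toLex (i, j)) + ∑ i' ∈ Finset.univ.filter (fun i' : Fin n => i' < i),
          e (toLex (i', j))
        = ∑ x ∈ insert i (Finset.univ.filter (fun i' : Fin n => i' < i)), e (toLex (x, j)) :=
          (Finset.sum_insert (f := fun x => e (toLex (x, j))) hnotmemc).symm
      _ ≤ ∑ x : Fin n, e (toLex (x, j)) :=
          Finset.sum_le_sum_of_subset (Finset.subset_univ _)
      _ = κ j := h.2 j
  -- identify partial sums with range sums of nw
  have hrw : ∑ j' ∈ Finset.univ.filter (fun j' : Fin m => j' < j), e (toLex (i, j'))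
      = ∑ t ∈ range (j : ℕ), nw μ κ (i : ℕ) t := by
    rw [Finset.sum_congr rfl fun j' hj' => hrowa j' (Finset.mem_filter.mp hj').2]
    simp only [W_apply]
    exact sum_filter_lt (fun t => nw μ κ (i : ℕ) t) j
  have hcw : ∑ i' ∈ Finset.univ.filter (fun i' : Fin n => i' < i), e (toLex (i', j))
      = ∑ t ∈ range (i : ℕ), nw μ κ t (j : ℕ) := by
    rw [Finset.sum_congr rfl fun i' hi' => hcola i' (Finset.mem_filter.mp hi').2]
    simp only [W_apply]
    exact sum_filter_lt (fun t => nw μ κ t (j : ℕ)) i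
  have hrowle' : e (toLex (i, j)) + ∑ t ∈ range (j:ℕ), nw μ κ (i:ℕ) t ≤ pad n μ (i:ℕ) := by
    rw [pad_coe, ← hrw]; exact hrowle
  have hcolle' : e (toLex (i, j)) + ∑ t ∈ range (i:ℕ), nw μ κ t (j:ℕ) ≤ pad m κ (j:ℕ) := by
    rw [pad_coe, ← hcw]; exact hcolle
  have hg := nw_greedy μ κ (i : ℕ) (j : ℕ)
  have hA : ∑ t ∈ range (j:ℕ), (nw μ κ (i:ℕ) t : ℤ) = ((∑ t ∈ range (j:ℕ), nw μ κ (i:ℕ) t : ℕ) : ℤ) := by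
    push_cast; rfl
  have hB : ∑ t ∈ range (i:ℕ), (nw μ κ t (j:ℕ) : ℤ) = ((∑ t ∈ range (i:ℕ), nw μ κ t (j:ℕ) : ℕ) : ℤ) := by
    push_cast; rfl
  rw [hA, hB] at hg
  have hle : e (toLex (i, j)) ≤ nw μ κ (i:ℕ) (j:ℕ) := by omega
  have hne' : e (toLex (i, j)) ≠ nw μ κ (i:ℕ) (j:ℕ) := by
    rw [hplex] at hpmem; exact hpmem
  exact lt_of_le_of_ne hle hne'

/-- Strict monotonicity of the NW corner matrix in the row margins. -/
lemma W_lt_W {μ μ' : Fin n → ℕ} {κ : Fin m → ℕ}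
    (htot : psum n μ n = psum m κ m) (htot' : psum n μ' n = psum m κ m)
    (i0 : Fin n) (hagr : ∀ i : Fin n, i < i0 → μ i = μ' i) (hlt : μ i0 < μ' i0) :
    toLex (W μ κ) < toLex (W μ' κ) := by
  classical
  -- partial sums agree up to i0
  have hps : ∀ t : ℕ, t ≤ (i0:ℕ) → psum n μ t = psum n μ' t := by
    intro t ht
    apply Finset.sum_congr rfl
    intro t' ht'
    rw [Finset.mem_range] at ht'
    have htn : t' < n := lt_of_lt_of_le (lt_of_lt_of_le ht' ht) (Nat.le_of_lt i0.isLt)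
    have : (⟨t', htn⟩ : Fin n) < i0 := by
      simp only [Fin.lt_def]; exact lt_of_lt_of_le ht' ht
    simp only [pad, htn, dif_pos]
    exact hagr _ this
  -- rows strictly before i0 agree
  have hrowsag : ∀ (i : Fin n) (j : Fin m), i < i0 → nw μ κ (i:ℕ) (j:ℕ) = nw μ' κ (i:ℕ) (j:ℕ) := by
    intro i j hi
    unfold nw
    rw [hps (i:ℕ) (le_of_lt hi), hps ((i:ℕ)+1) hi]
  -- row i0 pointwise dominated
  have hdom : ∀ j : Fin m, nw μ κ (i0:ℕ) (j:ℕ) ≤ nw μ' κ (i0:ℕ) (j:ℕ) := by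
    intro j
    have h1 := nw_cast μ κ (i0:ℕ) (j:ℕ)
    have h2 := nw_cast μ' κ (i0:ℕ) (j:ℕ)
    have h3 : psum n μ (i0:ℕ) = psum n μ' (i0:ℕ) := hps _ le_rfl
    have h4 : psum n μ ((i0:ℕ)+1) ≤ psum n μ' ((i0:ℕ)+1) := by
      rw [psum_succ, psum_succ, h3, pad_coe, pad_coe]
      exact Nat.add_le_add_left (le_of_lt hlt) _
    have h5 : psum n μ (i0:ℕ) ≤ psum n μ ((i0:ℕ)+1) := psum_mono μ (Nat.le_succ _)
    have h6 : psum m κ (j:ℕ) ≤ psum m κ ((j:ℕ)+1) := psum_mono κ (Nat.le_succ _)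
    omega
  -- row sums differ
  have hsums : ∑ j : Fin m, nw μ κ (i0:ℕ) (j:ℕ) < ∑ j : Fin m, nw μ' κ (i0:ℕ) (j:ℕ) := by
    rw [nw_row_sum μ κ htot.le i0, nw_row_sum μ' κ htot'.le i0]; exact hlt
  have hex : (Finset.univ.filter
      (fun j : Fin m => nw μ κ (i0:ℕ) (j:ℕ) ≠ nw μ' κ (i0:ℕ) (j:ℕ))).Nonempty := by
    by_contra hc
    rw [Finset.not_nonempty_iff_eq_empty, Finset.filter_eq_empty_iff] at hc
    exact absurd (Finset.sum_congr rfl fun j _ => not_ne_iff.mp (hc (Finset.mem_univ j)))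
      (ne_of_lt hsums)
  set j0 := (Finset.univ.filter
      (fun j : Fin m => nw μ κ (i0:ℕ) (j:ℕ) ≠ nw μ' κ (i0:ℕ) (j:ℕ))).min' hex with hj0
  have hj0ne : nw μ κ (i0:ℕ) (j0:ℕ) ≠ nw μ' κ (i0:ℕ) (j0:ℕ) := by
    have := Finset.min'_mem _ hex
    rw [Finset.mem_filter] at this; exact this.2
  have hj0ag : ∀ j : Fin m, j < j0 → nw μ κ (i0:ℕ) (j:ℕ) = nw μ' κ (i0:ℕ) (j:ℕ) := by
    intro j hjlt
    by_contra hc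
    exact absurd (Finset.min'_le _ j (Finset.mem_filter.mpr ⟨Finset.mem_univ j, hc⟩))
      (not_le.mpr hjlt)
  rw [Finsupp.Lex.lt_iff]
  refine ⟨toLex (i0, j0), ?_, lt_of_le_of_ne (hdom j0) hj0ne⟩
  intro q hq
  have hq' : toLex ((ofLex q).1, (ofLex q).2) < toLex (i0, j0) := hq
  rcases Prod.Lex.lt_iff.mp hq' with h | ⟨h1, h2⟩
  · exact hrowsag (ofLex q).1 (ofLex q).2 h
  · show nw μ κ ((ofLex q).1 : ℕ) ((ofLex q).2 : ℕ) = nw μ' κ _ _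
    rw [show (ofLex q).1 = i0 from h1]
    exact hj0ag (ofLex q).2 h2

section LeadM
variable {R : Type*} [CommSemiring R] {σ : Type*} [LinearOrder σ]

lemma leadM_eq {f : MvPolynomial σ R} {w : σ →₀ ℕ} (hw : w ∈ f.support)
    (hub : ∀ e ∈ f.support, toLex e ≤ toLex w) : leadM f = toLex w := by
  letI : DecidableEq (Lex (σ →₀ ℕ)) := Classical.decEq _
  have hmax : (f.support.image (toLex : (σ →₀ ℕ) → Lex (σ →₀ ℕ))).max
      = ((toLex w : Lex (σ →₀ ℕ)) : WithBot (Lex (σ →₀ ℕ))) := by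
    apply le_antisymm
    · apply Finset.max_le
      intro b hb
      rw [Finset.mem_image] at hb
      obtain ⟨e, he, rfl⟩ := hb
      exact_mod_cast hub e he
    · exact Finset.le_max (Finset.mem_image_of_mem _ hw)
  rw [leadM, hmax]
  rfl

lemma leadM_mem {f : MvPolynomial σ R} (h : f ≠ 0) : ofLex (leadM f) ∈ f.support := by
  letI : DecidableEq (Lex (σ →₀ ℕ)) := Classical.decEq _
  have hne : (f.support.image (toLex : (σ →₀ ℕ) → Lex (σ →₀ ℕ))).Nonempty :=
    (MvPolynomial.support_nonempty.mpr h).image _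
  obtain ⟨b, hb⟩ := Finset.max_of_nonempty hne
  have hbm : b ∈ f.support.image toLex := Finset.mem_of_max hb
  rw [Finset.mem_image] at hbm
  obtain ⟨e, he, rfl⟩ := hbm
  have : leadM f = toLex e := by rw [leadM, hb]; rfl
  rw [this]
  exact he

lemma le_leadM {f : MvPolynomial σ R} {e : σ →₀ ℕ} (he : e ∈ f.support) :
    toLex e ≤ leadM f := by
  letI : DecidableEq (Lex (σ →₀ ℕ)) := Classical.decEq _
  have h : f ≠ 0 := by
    intro h; rw [h] at he; simp at he
  have hne : (f.support.image (toLex : (σ →₀ ℕ) → Lex (σ →₀ ℕ))).Nonempty :=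
    (MvPolynomial.support_nonempty.mpr h).image _
  obtain ⟨b, hb⟩ := Finset.max_of_nonempty hne
  have hB : leadM f = b := by rw [leadM, hb]; rfl
  rw [hB]
  have := Finset.le_max (Finset.mem_image_of_mem (toLex : (σ →₀ ℕ) → Lex (σ →₀ ℕ)) he)
  rw [hb] at this
  exact_mod_cast this

end LeadM

section Prod
variable {R : Type*} [CommSemiring R] {σ ι : Type*}

lemma prod_monomial (s : Finset ι) (f : ι → (σ →₀ ℕ)) (a : ι → R) :
    ∏ i ∈ s, (monomial (f i) (a i) : MvPolynomial σ R)
      = monomial (∑ i ∈ s, f i) (∏ i ∈ s, a i) := by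
  classical
  induction s using Finset.cons_induction with
  | empty => simp [MvPolynomial.monomial_zero']
  | cons x s hx ih =>
      rw [Finset.prod_cons, Finset.sum_cons, Finset.prod_cons, ih, MvPolynomial.monomial_mul]

end Prod

section Expand
variable {k : Type} [Field k] [CharZero k] {n m : ℕ}

/-- The matrix `d` as an exponent vector on `Lex (Fin n × Fin m)`. -/
noncomputable def Ed (n m : ℕ) (d : Fin n → Fin m → ℕ) : Lex (Fin n × Fin m) →₀ ℕ :=
  Finsupp.equivFunOnFinite.symm (fun p => d (ofLex p).1 (ofLex p).2)

lemma Ed_apply (d : Fin n → Fin m → ℕ) (i : Fin n) (j : Fin m) :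
    Ed n m d (toLex (i, j)) = d i j := rfl

lemma F_pow (i : Fin n) (r : ℕ) :
    (∑ j : Fin m, (C (X (toLex (i, j))) * X j :
        MvPolynomial (Fin m) (MvPolynomial (Lex (Fin n × Fin m)) k))) ^ r
    = ∑ d ∈ piAntidiag (univ : Finset (Fin m)) r,
        monomial (Finsupp.equivFunOnFinite.symm d)
          ((Nat.multinomial univ d : MvPolynomial (Lex (Fin n × Fin m)) k)
            * ∏ j, X (toLex (i, j)) ^ d j) := by
  rw [Finset.sum_pow_eq_sum_piAntidiag]
  refine Finset.sum_congr rfl fun d _ => ?_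
  rw [monomial_eq, Finsupp.prod_pow]
  have hD : ∀ j : Fin m, (Finsupp.equivFunOnFinite.symm d) j = d j := fun j => rfl
  simp_rw [hD, mul_pow]
  rw [Finset.prod_mul_distrib, map_mul]
  rw [← map_natCast (C : MvPolynomial (Lex (Fin n × Fin m)) k →+* _) (Nat.multinomial univ d)]
  rw [mul_assoc]
  congr 1
  congr 1
  rw [map_prod]
  exact Finset.prod_congr rfl fun j _ => (C_pow _ _).symm

lemma aeval_F_monomial (μ0 : Fin n →₀ ℕ) :
    (aeval (fun i => ∑ j : Fin m, (C (X (toLex (i, j))) * X j :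
        MvPolynomial (Fin m) (MvPolynomial (Lex (Fin n × Fin m)) k)))) (monomial μ0 (1 : k))
    = ∑ d ∈ Fintype.piFinset (fun i : Fin n => piAntidiag (univ : Finset (Fin m)) (μ0 i)),
        monomial (∑ i, Finsupp.equivFunOnFinite.symm (d i))
          (∏ i, ((Nat.multinomial univ (d i) : MvPolynomial (Lex (Fin n × Fin m)) k)
            * ∏ j, X (toLex (i, j)) ^ d i j)) := by
  rw [aeval_monomial, map_one, one_mul, Finsupp.prod_pow]
  simp_rw [F_pow]
  rw [Finset.prod_univ_sum]
  refine Finset.sum_congr rfl fun d _ => ?_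
  rw [prod_monomial]

lemma inner_prod_eq (d : Fin n → Fin m → ℕ) :
    (∏ i, ((Nat.multinomial univ (d i) : MvPolynomial (Lex (Fin n × Fin m)) k)
      * ∏ j, X (toLex (i, j)) ^ d i j))
    = monomial (Ed n m d) (((∏ i, Nat.multinomial univ (d i) : ℕ) : k)) := by
  rw [monomial_eq, Finsupp.prod_pow, Finset.prod_mul_distrib]
  rw [← Nat.cast_prod]
  rw [← map_natCast (C : k →+* MvPolynomial (Lex (Fin n × Fin m)) k) (∏ i, Nat.multinomial univ (d i))]
  congr 1
  have h1 : ∏ p : Lex (Fin n × Fin m), (X p ^ Ed n m d p : MvPolynomial (Lex (Fin n × Fin m)) k)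
      = ∏ q : Fin n × Fin m, X (toLex q) ^ Ed n m d (toLex q) :=
    (Fintype.prod_equiv (toLex : (Fin n × Fin m) ≃ Lex (Fin n × Fin m))
      (fun q => X (toLex q) ^ Ed n m d (toLex q)) (fun p => X p ^ Ed n m d p)
      (fun q => rfl)).symm
  rw [h1, Fintype.prod_prod_type]
  rfl

lemma pol_monomial (μ0 : Fin n →₀ ℕ) (κ : Fin m → ℕ) :
    Pol (fun i j => toLex (i, j)) (monomial μ0 (1 : k)) κ
      = ∑ d ∈ Fintype.piFinset (fun i : Fin n => piAntidiag (univ : Finset (Fin m)) (μ0 i)),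
          if (∑ i, Finsupp.equivFunOnFinite.symm (d i) : Fin m →₀ ℕ)
              = Finsupp.equivFunOnFinite.symm κ
          then monomial (Ed n m d) (((∏ i, Nat.multinomial univ (d i) : ℕ) : k)) else 0 := by
  rw [Pol, aeval_F_monomial, MvPolynomial.coeff_sum]
  refine Finset.sum_congr rfl fun d _ => ?_
  rw [MvPolynomial.coeff_monomial]
  split_ifs with h
  · rw [inner_prod_eq]
  · rfl

lemma mem_support_pol (μ0 : Fin n →₀ ℕ) (κ : Fin m → ℕ) (e : Lex (Fin n × Fin m) →₀ ℕ) :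
    e ∈ (Pol (fun i j => toLex (i, j)) (monomial μ0 (1 : k)) κ).support ↔ Marg e (⇑μ0) κ := by
  rw [MvPolynomial.mem_support_iff, pol_monomial, MvPolynomial.coeff_sum]
  constructor
  · intro hne
    obtain ⟨d, hd, hcoeff⟩ := Finset.exists_ne_zero_of_sum_ne_zero hne
    by_cases hcol : (∑ i, Finsupp.equivFunOnFinite.symm (d i) : Fin m →₀ ℕ)
        = Finsupp.equivFunOnFinite.symm κ
    swap
    · rw [if_neg hcol, MvPolynomial.coeff_zero] at hcoeff
      exact absurd rfl hcoeff
    rw [if_pos hcol, MvPolynomial.coeff_monomial] at hcoeff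
    by_cases hEd : Ed n m d = e
    swap
    · rw [if_neg hEd] at hcoeff; exact absurd rfl hcoeff
    have happ : ∀ (i : Fin n) (j : Fin m), e (toLex (i, j)) = d i j := by
      intro i j; rw [← hEd]; rfl
    constructor
    · intro i
      have hrow := (Finset.mem_piAntidiag.mp (Fintype.mem_piFinset.mp hd i)).1
      rw [← hrow]
      exact Finset.sum_congr rfl fun j _ => happ i j
    · intro j
      have hc := DFunLike.congr_fun hcol j
      rw [Finsupp.finset_sum_apply] at hc
      have heq : ∀ i : Fin n, (Finsupp.equivFunOnFinite.symm (d i) : Fin m →₀ ℕ) j = d i j :=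
        fun i => rfl
      rw [Finset.sum_congr rfl fun i _ => heq i] at hc
      have hκ : (Finsupp.equivFunOnFinite.symm κ : Fin m →₀ ℕ) j = κ j := rfl
      rw [hκ] at hc
      rw [← hc]
      exact Finset.sum_congr rfl fun i _ => happ i j
  · intro hM
    set d0 : Fin n → Fin m → ℕ := fun i j => e (toLex (i, j)) with hd0
    have hmem : d0 ∈ Fintype.piFinset
        (fun i : Fin n => piAntidiag (univ : Finset (Fin m)) (μ0 i)) :=
      Fintype.mem_piFinset.mpr fun i =>
        Finset.mem_piAntidiag.mpr ⟨hM.1 i, fun j _ => Finset.mem_univ j⟩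
    have hother : ∀ d ∈ Fintype.piFinset
        (fun i : Fin n => piAntidiag (univ : Finset (Fin m)) (μ0 i)), d ≠ d0 →
        MvPolynomial.coeff e (if (∑ i, Finsupp.equivFunOnFinite.symm (d i) : Fin m →₀ ℕ)
            = Finsupp.equivFunOnFinite.symm κ
          then monomial (Ed n m d) (((∏ i, Nat.multinomial univ (d i) : ℕ) : k)) else 0) = 0 := by
      intro d _ hne'
      by_cases hcol' : (∑ i, Finsupp.equivFunOnFinite.symm (d i) : Fin m →₀ ℕ)
          = Finsupp.equivFunOnFinite.symm κ
      · have hEdne : Ed n m d ≠ e := by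
          intro hEd'
          apply hne'
          funext i j
          show d i j = e (toLex (i, j))
          rw [← hEd']
          rfl
        rw [if_pos hcol', MvPolynomial.coeff_monomial, if_neg hEdne]
      · rw [if_neg hcol', MvPolynomial.coeff_zero]
    rw [Finset.sum_eq_single_of_mem d0 hmem hother]
    have hcol : (∑ i, Finsupp.equivFunOnFinite.symm (d0 i) : Fin m →₀ ℕ)
        = Finsupp.equivFunOnFinite.symm κ := by
      ext j
      rw [Finsupp.finset_sum_apply]
      exact hM.2 j
    rw [if_pos hcol, MvPolynomial.coeff_monomial,
      if_pos (Finsupp.ext fun p : Lex (Fin n × Fin m) => rfl : Ed n m d0 = e)]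
    exact Nat.cast_ne_zero.mpr
      (Finset.prod_pos fun i _ => Nat.multinomial_pos _ _).ne'

end Expand

section Linear
variable {k : Type} [Field k] {n m : ℕ}

lemma pol_eq_sum (f : MvPolynomial (Fin n) k) (κ : Fin m → ℕ) :
    Pol (fun i j => toLex (i, j) : Fin n → Fin m → Lex (Fin n × Fin m)) f κ
      = ∑ v ∈ f.support, MvPolynomial.coeff v f •
          Pol (fun i j => toLex (i, j) : Fin n → Fin m → Lex (Fin n × Fin m))
            (monomial v (1 : k)) κ := by
  simp only [Pol]
  conv_lhs => rw [f.as_sum]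
  rw [map_sum, MvPolynomial.coeff_sum]
  refine Finset.sum_congr rfl fun v hv => ?_
  have h1 : (monomial v) (MvPolynomial.coeff v f)
      = MvPolynomial.coeff v f • (monomial v) (1 : k) := by
    rw [MvPolynomial.smul_monomial, smul_eq_mul, mul_one]
  rw [h1, map_smul, MvPolynomial.coeff_smul]

lemma coeff_pol (f : MvPolynomial (Fin n) k) (κ : Fin m → ℕ) (e : Lex (Fin n × Fin m) →₀ ℕ) :
    MvPolynomial.coeff e (Pol (fun i j => toLex (i, j) : Fin n → Fin m → Lex (Fin n × Fin m)) f κ)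
      = ∑ v ∈ f.support, MvPolynomial.coeff v f *
          MvPolynomial.coeff e (Pol (fun i j => toLex (i, j) : Fin n → Fin m → Lex (Fin n × Fin m))
            (monomial v (1 : k)) κ) := by
  rw [pol_eq_sum, MvPolynomial.coeff_sum]
  exact Finset.sum_congr rfl fun v _ => by rw [MvPolynomial.coeff_smul, smul_eq_mul]

end Linear

section IdealPart
variable {k : Type} [Field k] {n m : ℕ}

lemma pol_mem_span (G : Subgroup (Equiv.Perm (Fin n))) (f : MvPolynomial (Fin n) k)
    (hf : f ∈ Ideal.span {h : MvPolynomial (Fin n) k |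
      (∀ g ∈ G, rename (fun i => g⁻¹ i) h = h) ∧ constantCoeff h = 0})
    (κ : Fin m → ℕ) :
    Pol (fun i j => toLex (i, j) : Fin n → Fin m → Lex (Fin n × Fin m)) f κ ∈
      Ideal.span {h : MvPolynomial (Lex (Fin n × Fin m)) k |
        (∀ g ∈ G, rename
          (fun p : Lex (Fin n × Fin m) => toLex (g⁻¹ (ofLex p).1, (ofLex p).2)) h = h) ∧
        constantCoeff h = 0} := by
  classical
  set Sm : Set (MvPolynomial (Lex (Fin n × Fin m)) k) :=
    {h | (∀ g ∈ G, rename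
        (fun p : Lex (Fin n × Fin m) => toLex (g⁻¹ (ofLex p).1, (ofLex p).2)) h = h) ∧
      constantCoeff h = 0} with hSm
  set J := Ideal.span Sm with hJ
  set F : Fin n → MvPolynomial (Fin m) (MvPolynomial (Lex (Fin n × Fin m)) k) :=
    fun i => ∑ j : Fin m, C (X (toLex (i, j))) * X j with hF
  -- key: polarizations of generators are generators
  have hkey : ∀ h ∈ {h : MvPolynomial (Fin n) k |
      (∀ g ∈ G, rename (fun i => g⁻¹ i) h = h) ∧ constantCoeff h = 0},
      ∀ κ' : Fin m →₀ ℕ, MvPolynomial.coeff κ' (aeval F h) ∈ Sm := by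
    intro h hh κ'
    constructor
    · -- invariance
      intro g hg
      set ψ : Lex (Fin n × Fin m) → Lex (Fin n × Fin m) :=
        fun p => toLex (g⁻¹ (ofLex p).1, (ofLex p).2) with hψ
      have h1 : rename ψ (MvPolynomial.coeff κ' (aeval F h))
          = MvPolynomial.coeff κ' (MvPolynomial.map (rename ψ).toRingHom (aeval F h)) := by
        rw [MvPolynomial.coeff_map]
        rfl
      have h2 : MvPolynomial.map ((rename ψ : MvPolynomial (Lex (Fin n × Fin m)) k →ₐ[k]
          MvPolynomial (Lex (Fin n × Fin m)) k)).toRingHom (aeval F h)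
          = aeval (fun i => MvPolynomial.map (rename ψ).toRingHom (F i)) h := by
        have h3 := MvPolynomial.comp_aeval F
          (MvPolynomial.mapAlgHom (rename ψ : MvPolynomial (Lex (Fin n × Fin m)) k →ₐ[k]
            MvPolynomial (Lex (Fin n × Fin m)) k))
        exact DFunLike.congr_fun h3 h
      have h4 : (fun i => MvPolynomial.map (rename ψ).toRingHom (F i))
          = fun i => F (g⁻¹ i) := by
        funext i
        rw [hF]
        simp only [map_sum, map_mul, MvPolynomial.map_C, MvPolynomial.map_X,
          AlgHom.toRingHom_eq_coe, RingHom.coe_coe, rename_X]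
        rfl
      have h5 : aeval (F ∘ fun i => g⁻¹ i) h = aeval F ((rename fun i => g⁻¹ i) h) :=
        (MvPolynomial.aeval_rename (fun i => g⁻¹ i) F h).symm
      rw [h1, h2, h4, show (fun i => F (g⁻¹ i)) = F ∘ (fun i => g⁻¹ i) from rfl, h5,
        hh.1 g hg]
    · -- constant coefficient
      set z : MvPolynomial (Lex (Fin n × Fin m)) k →ₐ[k] k :=
        aeval (fun _ => (0 : k)) with hz
      have h0 : constantCoeff (MvPolynomial.coeff κ' (aeval F h))
          = z (MvPolynomial.coeff κ' (aeval F h)) := by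
        have hzz : z (MvPolynomial.coeff κ' (aeval F h))
            = aeval (0 : Lex (Fin n × Fin m) → k) (MvPolynomial.coeff κ' (aeval F h)) := rfl
        rw [hzz, MvPolynomial.aeval_zero]
        simp
      have h1 : z (MvPolynomial.coeff κ' (aeval F h))
          = MvPolynomial.coeff κ' (MvPolynomial.map z.toRingHom (aeval F h)) := by
        rw [MvPolynomial.coeff_map]
        rfl
      have h2 : MvPolynomial.map z.toRingHom (aeval F h)
          = aeval (fun i => MvPolynomial.map z.toRingHom (F i)) h :=
        DFunLike.congr_fun (MvPolynomial.comp_aeval F (MvPolynomial.mapAlgHom z)) h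
      have h3 : (fun i => MvPolynomial.map z.toRingHom (F i))
          = fun _ => (0 : MvPolynomial (Fin m) k) := by
        funext i
        rw [hF]
        simp only [map_sum, map_mul, MvPolynomial.map_C, MvPolynomial.map_X,
          AlgHom.toRingHom_eq_coe, RingHom.coe_coe]
        have hzX : ∀ j : Fin m, z (X (toLex (i, j))) = 0 := fun j => by
          rw [hz, MvPolynomial.aeval_X]
        simp [hzX]
      have h4 : aeval (fun _ => (0 : MvPolynomial (Fin m) k)) h
          = algebraMap k (MvPolynomial (Fin m) k) (constantCoeff h) :=
        MvPolynomial.aeval_zero h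
      rw [h0, h1, h2, h3, h4, hh.2]
      simp
  -- the set of polynomials all of whose polarizations lie in J is an ideal
  set T : Ideal (MvPolynomial (Fin n) k) :=
    { carrier := {q | ∀ κ' : Fin m →₀ ℕ, MvPolynomial.coeff κ' (aeval F q) ∈ J},
      add_mem' := by
        intro a b ha hb κ'
        rw [map_add, MvPolynomial.coeff_add]
        exact J.add_mem (ha κ') (hb κ')
      zero_mem' := by
        intro κ'
        rw [map_zero, MvPolynomial.coeff_zero]
        exact J.zero_mem
      smul_mem' := by
        intro c x hx κ'
        rw [smul_eq_mul, map_mul, MvPolynomial.coeff_mul]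
        exact J.sum_mem fun ab _ => J.mul_mem_left _ (hx ab.2) } with hT
  have hsub : {h : MvPolynomial (Fin n) k |
      (∀ g ∈ G, rename (fun i => g⁻¹ i) h = h) ∧ constantCoeff h = 0} ⊆ (T : Set _) := by
    intro h hh κ'
    exact Ideal.subset_span (hkey h hh κ')
  have hfT : f ∈ T := Ideal.span_le.mpr hsub hf
  exact hfT (Finsupp.equivFunOnFinite.symm κ)

end IdealPart

end PolAux

/-- `char k = 0`, `G ≤ Sₙ` a permutation group acting naturally on `V = kⁿ`
and diagonally on `Vᵐ`. For a nonzero `f` in the Hilbert ideal `I(G,V)` and any `κ ∈ ℕᵐ`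
with `Pol_κ(LeadM(f)) ≠ 0`, the leading monomial of `Pol_κ(LeadM(f))` lies in the lead term
ideal `Lead(I(G,Vᵐ))`. Leading monomials in `k[V]` use lex with `x₁ > ⋯ > xₙ`, those in
`k[Vᵐ]` use lex with `x₁^{(1)} > x₁^{(2)} > ⋯ > x₁^{(m)} > x₂^{(1)} > ⋯ > xₙ^{(m)}`. -/
theorem leadM_pol_leadM_mem_leadIdeal (k : Type) [Field k] [CharZero k] (n m : ℕ)
    (G : Subgroup (Equiv.Perm (Fin n)))
    (f : MvPolynomial (Fin n) k) (hf0 : f ≠ 0)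
    (hf : f ∈ Ideal.span {h : MvPolynomial (Fin n) k |
      (∀ g ∈ G, rename (fun i => g⁻¹ i) h = h) ∧ constantCoeff h = 0})
    (κ : Fin m → ℕ)
    (hpol : Pol (fun i j => toLex (i, j) : Fin n → Fin m → Lex (Fin n × Fin m))
      (monomial (ofLex (leadM f)) (1 : k)) κ ≠ 0) :
    monomial
        (ofLex (leadM (Pol (fun i j => toLex (i, j) : Fin n → Fin m → Lex (Fin n × Fin m))
          (monomial (ofLex (leadM f)) (1 : k)) κ))) (1 : k) ∈
      leadIdeal (Ideal.span {h : MvPolynomial (Lex (Fin n × Fin m)) k |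
        (∀ g ∈ G, rename
          (fun p : Lex (Fin n × Fin m) => toLex (g⁻¹ (ofLex p).1, (ofLex p).2)) h = h) ∧
        constantCoeff h = 0}) := by
  classical
  open PolAux in
  set lam0 : Fin n →₀ ℕ := ofLex (leadM f) with hlam0
  set P := Pol (fun i j => toLex (i, j) : Fin n → Fin m → Lex (Fin n × Fin m))
    (monomial lam0 (1 : k)) κ with hPdef
  have hP0 : P ≠ 0 := hpol
  obtain ⟨e0, he0⟩ := MvPolynomial.support_nonempty.mpr hP0
  have hM0 : PolAux.Marg e0 ⇑lam0 κ := (PolAux.mem_support_pol lam0 κ e0).mp he0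
  have htot : PolAux.psum n ⇑lam0 n = PolAux.psum m κ m := PolAux.marg_total hM0
  set Wv := PolAux.W ⇑lam0 κ with hWdef
  have hMW : PolAux.Marg Wv ⇑lam0 κ := PolAux.marg_W htot
  have hWsupp : Wv ∈ P.support := (PolAux.mem_support_pol lam0 κ Wv).mpr hMW
  have hub : ∀ e ∈ P.support, toLex e ≤ toLex Wv := fun e he =>
    PolAux.le_W ((PolAux.mem_support_pol lam0 κ e).mp he)
  have hleadP : leadM P = toLex Wv := PolAux.leadM_eq hWsupp hub
  -- the polarization of f itself
  set Fq := Pol (fun i j => toLex (i, j) : Fin n → Fin m → Lex (Fin n × Fin m)) f κ with hFqdef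
  have hFmem := PolAux.pol_mem_span G f hf κ
  have hlam0supp : lam0 ∈ f.support := PolAux.leadM_mem hf0
  have hcoeffW : MvPolynomial.coeff Wv Fq = MvPolynomial.coeff lam0 f * MvPolynomial.coeff Wv P := by
    rw [hFqdef, PolAux.coeff_pol]
    refine Finset.sum_eq_single_of_mem lam0 hlam0supp ?_
    intro v hv hvne
    have hz : MvPolynomial.coeff Wv
        (Pol (fun i j => toLex (i, j) : Fin n → Fin m → Lex (Fin n × Fin m))
          (monomial v (1 : k)) κ) = 0 := by
      by_contra hC
      have hMv : PolAux.Marg Wv ⇑v κ :=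
        (PolAux.mem_support_pol v κ Wv).mp (MvPolynomial.mem_support_iff.mpr hC)
      exact hvne (Finsupp.ext fun i => by rw [← hMv.1 i, hMW.1 i])
    rw [hz, mul_zero]
  have hcoeffW0 : MvPolynomial.coeff Wv Fq ≠ 0 := by
    rw [hcoeffW]
    exact mul_ne_zero (MvPolynomial.mem_support_iff.mp hlam0supp)
      (MvPolynomial.mem_support_iff.mp hWsupp)
  have hFne : Fq ≠ 0 := fun h => hcoeffW0 (by rw [h, MvPolynomial.coeff_zero])
  have hubF : ∀ e ∈ Fq.support, toLex e ≤ toLex Wv := by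
    intro e he
    have hce := MvPolynomial.mem_support_iff.mp he
    rw [hFqdef, PolAux.coeff_pol] at hce
    obtain ⟨v, hv, hterm⟩ := Finset.exists_ne_zero_of_sum_ne_zero hce
    have hpe : MvPolynomial.coeff e
        (Pol (fun i j => toLex (i, j) : Fin n → Fin m → Lex (Fin n × Fin m))
          (monomial v (1 : k)) κ) ≠ 0 := fun hzz => hterm (by rw [hzz, mul_zero])
    have hMe : PolAux.Marg e ⇑v κ :=
      (PolAux.mem_support_pol v κ e).mp (MvPolynomial.mem_support_iff.mpr hpe)
    have h1 : toLex e ≤ toLex (PolAux.W ⇑v κ) := PolAux.le_W hMe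
    rcases eq_or_ne v lam0 with rfl | hne
    · exact h1
    · have hvle : toLex v ≤ leadM f := PolAux.le_leadM hv
      have hvlt : toLex v < toLex lam0 := by
        refine lt_of_le_of_ne ?_ fun hEq => hne (by
          have := congrArg ofLex hEq
          simpa using this)
        rw [hlam0, toLex_ofLex]
        exact hvle
      obtain ⟨i0, hag, hlt⟩ := Finsupp.Lex.lt_iff.mp hvlt
      have htotv : PolAux.psum n ⇑v n = PolAux.psum m κ m := PolAux.marg_total hMe
      have h2 : toLex (PolAux.W ⇑v κ) < toLex (PolAux.W ⇑lam0 κ) :=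
        PolAux.W_lt_W htotv htot i0 (fun i hi => hag i hi) hlt
      exact le_of_lt (lt_of_le_of_lt h1 h2)
  have hleadF : leadM Fq = toLex Wv :=
    PolAux.leadM_eq (MvPolynomial.mem_support_iff.mpr hcoeffW0) hubF
  apply Ideal.subset_span
  refine ⟨Fq, hFmem, hFne, ?_⟩
  rw [hleadP, hleadF]
end
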